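/- Let Y_t = x'β_t + u_t with E[u_t | x, h] = 0 for t = 0,1, T be a {0,1}-valued random variable with E[T(u_1 − u_0) | x, h] = 0, and Y = T Y_1 + (1 − T) Y_0. Set g = g(x,h) = E[T | x, h] and z = (g x', (1−g) x')'. Then E[z (Y − x̃'θ) | x, h] = 0, where x̃ = (T x', (1−T) x')' and θ = (β_1', β_0')'. -/

import Mathlib

open MeasureTheory RealInnerProductSpace

lemma aux_condexp_smul_zero {Ω : Type*} {m0 : MeasurableSpace Ω} (μ : Measure Ω)
    [IsProbabilityMeasure μ] {k : ℕ}
    (m : MeasurableSpace Ω) (hm : m ≤ m0)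
    (x : Ω → EuclideanSpace ℝ (Fin k)) (hx : Measurable[m] x)
    (c : Ω → ℝ) (hc : Measurable[m] c)
    (u : Ω → ℝ) (hu_int : Integrable u μ) (huc : μ[u|m] =ᵐ[μ] 0)
    (hint : Integrable (fun ω => (c ω * u ω) • x ω) μ) :
    μ[fun ω => (c ω * u ω) • x ω|m] =ᵐ[μ] 0 := by
  haveI : SigmaFinite (μ.trim hm) := IsFiniteMeasure.toSigmaFinite _
  refine (ae_eq_condExp_of_forall_setIntegral_eq hm hint
    (fun s _ _ => Integrable.integrableOn (s := s) (μ := μ) (integrable_zero Ω (EuclideanSpace ℝ (Fin k)) μ (m := m0)))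
    (fun s hs hμs => ?_)
    (StronglyMeasurable.aestronglyMeasurable stronglyMeasurable_zero)).symm
  simp only [Pi.zero_apply, integral_zero]
  symm
  have hFint : Integrable (fun ω => (c ω * u ω) • x ω) (μ.restrict s) := Integrable.integrableOn (s := s) (μ := μ) hint
  ext i
  have hproj := @ContinuousLinearMap.integral_comp_comm Ω (EuclideanSpace ℝ (Fin k)) ℝ m0 (μ.restrict s) ℝ _ _ _ _ _ _ _ _ _ (EuclideanSpace.proj i) _ hFint
  simp only [PiLp.proj_apply, PiLp.smul_apply, smul_eq_mul] at hproj
  have h0 : (0 : EuclideanSpace ℝ (Fin k)) i = 0 := rfl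
  rw [h0, ← hproj]
  have hxi : Measurable[m] (fun ω => x ω i) := (EuclideanSpace.proj (𝕜 := ℝ) i).continuous.measurable.comp hx
  have hcoord : (fun ω => c ω * u ω * x ω i) = (fun ω => c ω * x ω i) * u := by
    funext ω; simp only [Pi.mul_apply]; ring
  rw [hcoord]
  have hfgint : Integrable ((fun ω => c ω * x ω i) * u) μ := by
    rw [← hcoord]
    have := (EuclideanSpace.proj (𝕜 := ℝ) i).integrable_comp hint
    simpa [PiLp.proj_apply, PiLp.smul_apply, smul_eq_mul] using this
  have hmul := condExp_mul_of_stronglyMeasurable_left (μ := μ) (m := m)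
    ((hc.mul hxi).stronglyMeasurable) hfgint hu_int
  have hzero : μ[(fun ω => c ω * x ω i) * u|m] =ᵐ[μ] 0 := by
    refine hmul.trans ?_
    filter_upwards [huc] with ω hω
    simp only [Pi.mul_apply, Pi.zero_apply] at *
    rw [hω, mul_zero]
  calc ∫ ω in s, ((fun ω => c ω * x ω i) * u) ω ∂μ
      = ∫ ω in s, (μ[(fun ω => c ω * x ω i) * u|m]) ω ∂μ :=
        (setIntegral_condExp hm hfgint hs).symm
    _ = ∫ _ω in s, (0 : ℝ) ∂μ :=
        @setIntegral_congr_ae Ω ℝ m0 _ _ _ _ _ μ (hm s hs) (hzero.mono fun ω hω _ => hω)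
    _ = 0 := by simp

/-- IV moment condition: with `Y_t = x'β_t + u_t`,
`E[u_t | x,h] = 0`, `E[T(u₁ − u₀) | x,h] = 0`, `g = E[T | x,h]` and
`z = (g x', (1−g) x')'`, the moment condition `E[z (Y − x̃'θ) | x,h] = 0`
holds, where `x̃ = (T x', (1−T) x')'` and `θ = (β₁', β₀')'`.  Here `m` is the
σ-algebra generated by `(x,h)`. -/
theorem stmt_10 {Ω : Type*} {m0 : MeasurableSpace Ω} (μ : Measure Ω)
    [IsProbabilityMeasure μ] {k : ℕ}
    (m : MeasurableSpace Ω) (hm : m ≤ m0)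
    (x : Ω → EuclideanSpace ℝ (Fin k)) (hx : Measurable[m] x)
    (T u0 u1 : Ω → ℝ) (hT01 : ∀ ω, T ω = 0 ∨ T ω = 1)
    (hu0_int : Integrable u0 μ) (hu1_int : Integrable u1 μ)
    (β0 β1 : EuclideanSpace ℝ (Fin k))
    (hu0 : μ[u0|m] =ᵐ[μ] 0) (hu1 : μ[u1|m] =ᵐ[μ] 0)
    (hTu : μ[fun ω => T ω * (u1 ω - u0 ω)|m] =ᵐ[μ] 0)
    (hTu_int : Integrable (fun ω => T ω * (u1 ω - u0 ω)) μ)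
    (g : Ω → ℝ) (hg_meas : Measurable[m] g) (hg : g =ᵐ[μ] μ[T|m])
    (Y : Ω → ℝ)
    (hY : ∀ ω, Y ω = T ω * (⟪x ω, β1⟫ + u1 ω) + (1 - T ω) * (⟪x ω, β0⟫ + u0 ω))
    (u : Ω → ℝ)
    (hu : ∀ ω, u ω = Y ω - (T ω * ⟪x ω, β1⟫ + (1 - T ω) * ⟪x ω, β0⟫))
    (hint1 : Integrable (fun ω => (g ω * u ω) • x ω) μ)
    (hint2 : Integrable (fun ω => ((1 - g ω) * u ω) • x ω) μ) :
    (μ[fun ω => (g ω * u ω) • x ω|m] =ᵐ[μ] 0) ∧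
      (μ[fun ω => ((1 - g ω) * u ω) • x ω|m] =ᵐ[μ] 0) := by
  have hueq : u = fun ω => T ω * (u1 ω - u0 ω) + u0 ω := by
    funext ω
    rw [hu ω, hY ω]; ring
  have hu_int : Integrable u μ := by
    rw [hueq]; exact hTu_int.add hu0_int
  have huc : μ[u|m] =ᵐ[μ] 0 := by
    rw [hueq]
    refine (condExp_add hTu_int hu0_int m).trans ?_
    filter_upwards [hTu, hu0] with ω h1 h2
    simp only [Pi.add_apply, Pi.zero_apply] at *
    rw [h1, h2, add_zero]
  exact ⟨aux_condexp_smul_zero μ m hm x hx g hg_meas u hu_int huc hint1,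
    aux_condexp_smul_zero μ m hm x hx (fun ω => 1 - g ω)
      (measurable_const.sub hg_meas) u hu_int huc hint2⟩
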